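/- arXiv:2406.08448 — 2 statements merged into one kernel-verified Lean document; each statement's English description precedes it below -/
import Mathlib

section
/- Define b_2(v) = (π β_ξ(v)(σ_s² + c²v) β_s + (1-π) β_s σ_s² β_ξ(v)) / (π β_ξ(v)(σ_s² + c²v) + (1-π) β_s σ_s²) where β_ξ(v) = σ_D²/(σ_D² + σ_s² + c²v), β_s = σ_D²/(σ_D² + σ_s²), parameters σ_D², σ_s², c² > 0 and 0 < π < 1. Then b_2 is strictly decreasing in the supply variance v > 0. -/
/-- The second-period price impact coefficient `b₂(v)` is strictly decreasing
in the (perceived) supply variance `v > 0`. -/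
theorem b2_strictAnti_in_supply_variance (σD2 σs2 c2 π : ℝ)
    (hσD2 : 0 < σD2) (hσs2 : 0 < σs2) (hc2 : 0 < c2) (hπ0 : 0 < π) (hπ1 : π < 1)
    (βs : ℝ) (hβs : βs = σD2 / (σD2 + σs2))
    (βξ : ℝ → ℝ) (hβξ : ∀ v, βξ v = σD2 / (σD2 + σs2 + c2 * v))
    (b2 : ℝ → ℝ)
    (hb2 : ∀ v, b2 v = (π * βξ v * (σs2 + c2 * v) * βs + (1 - π) * βs * σs2 * βξ v)
      / (π * βξ v * (σs2 + c2 * v) + (1 - π) * βs * σs2)) :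
    StrictAntiOn b2 (Set.Ioi (0 : ℝ)) := by
  have hDS : 0 < σD2 + σs2 := by linarith
  have h1π : 0 < 1 - π := by linarith
  -- simplified closed form on Ioi 0
  have hsimp : ∀ v, 0 < v → b2 v =
      (σD2 * (σs2 + π * c2 * v)) /
        (σs2 * (σD2 + σs2) + c2 * (σs2 + π * σD2) * v) := by
    intro v hv
    have hT : 0 < σD2 + σs2 + c2 * v := by positivity
    have hden1 : 0 < π * (σD2 / (σD2 + σs2 + c2 * v)) * (σs2 + c2 * v)
        + (1 - π) * (σD2 / (σD2 + σs2)) * σs2 := by positivity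
    have hden2 : 0 < σs2 * (σD2 + σs2) + c2 * (σs2 + π * σD2) * v := by positivity
    rw [hb2, hβξ, hβs]
    rw [div_eq_div_iff hden1.ne' hden2.ne']
    field_simp
    ring
  intro a ha b hb hab
  simp only [Set.mem_Ioi] at ha hb
  rw [hsimp a ha, hsimp b hb]
  have hda : 0 < σs2 * (σD2 + σs2) + c2 * (σs2 + π * σD2) * a := by positivity
  have hdb : 0 < σs2 * (σD2 + σs2) + c2 * (σs2 + π * σD2) * b := by positivity
  rw [div_lt_div_iff₀ hdb hda]
  nlinarith [mul_pos (mul_pos hσD2 hσs2) (mul_pos hc2 (mul_pos h1π (sub_pos.2 hab))),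
    mul_pos hσD2 hσs2, sq_nonneg (a - b)]
end

section
/- Let b_2 and b_2* be defined by the same formula b(v) = (π β_ξ(v)(σ_s² + c²v) β_s + (1-π) β_s σ_s² β_ξ(v)) / (π β_ξ(v)(σ_s² + c²v) + (1-π) β_s σ_s²) with β_ξ(v) = σ_D²/(σ_D² + σ_s² + c²v), evaluated at v = σ_θ,2² and v = σ_θ,1² respectively, where σ_θ,1² > σ_θ,2² > 0. Then b_2* < b_2. -/
set_option maxHeartbeats 1000000


/-- The informed investors' perceived second-period coefficient `b₂* = b(σθ,1²)`
(computed under their incorrectly larger supply variance `σθ,1² > σθ,2²`) is strictly smaller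
than the true coefficient `b₂ = b(σθ,2²)`. -/
theorem perceived_coefficient_lt_true (σD2 σs2 c2 π σθ1sq σθ2sq : ℝ)
    (hσD2 : 0 < σD2) (hσs2 : 0 < σs2) (hc2 : 0 < c2) (hπ0 : 0 < π) (hπ1 : π < 1)
    (hσθ2 : 0 < σθ2sq) (hσθ12 : σθ2sq < σθ1sq)
    (βs : ℝ) (hβs : βs = σD2 / (σD2 + σs2))
    (βξ : ℝ → ℝ) (hβξ : ∀ v, βξ v = σD2 / (σD2 + σs2 + c2 * v))
    (b : ℝ → ℝ)
    (hb : ∀ v, b v = (π * βξ v * (σs2 + c2 * v) * βs + (1 - π) * βs * σs2 * βξ v)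
      / (π * βξ v * (σs2 + c2 * v) + (1 - π) * βs * σs2))
    (b2 b2star : ℝ) (hb2 : b2 = b σθ2sq) (hb2star : b2star = b σθ1sq) :
    b2star < b2 := by
  have hS : (0:ℝ) < σD2 + σs2 := by linarith
  have key : ∀ v, 0 < v → b v = σD2 * (σs2 + π * c2 * v) /
      ((σD2 + σs2) * σs2 + c2 * v * (π * (σD2 + σs2) + (1 - π) * σs2)) := by
    intro v hv
    have hD : (0:ℝ) < σD2 + σs2 + c2 * v := by nlinarith
    have hfac : (0:ℝ) < π * (σD2 + σs2) + (1 - π) * σs2 := by nlinarith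
    have hden2 : (0:ℝ) < (σD2 + σs2) * σs2 + c2 * v * (π * (σD2 + σs2) + (1 - π) * σs2) :=
      add_pos (mul_pos hS hσs2) (mul_pos (mul_pos hc2 hv) hfac)
    rw [hb, hβξ, hβs]
    have hden1 : (0:ℝ) < π * (σD2 / (σD2 + σs2 + c2 * v)) * (σs2 + c2 * v)
        + (1 - π) * (σD2 / (σD2 + σs2)) * σs2 := by
      have h1 : (0:ℝ) < σD2 / (σD2 + σs2 + c2 * v) := div_pos hσD2 hD
      have h2 : (0:ℝ) < σD2 / (σD2 + σs2) := div_pos hσD2 hS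
      have : (0:ℝ) < σs2 + c2 * v := by nlinarith
      nlinarith [mul_pos (mul_pos hπ0 h1) this, mul_pos (mul_pos (by linarith : (0:ℝ) < 1 - π) h2) hσs2]
    rw [div_eq_div_iff (ne_of_gt hden1) (ne_of_gt hden2)]
    field_simp
    ring
  have hx : 0 < σθ2sq := hσθ2
  have hy : 0 < σθ1sq := lt_trans hσθ2 hσθ12
  rw [hb2, hb2star, key _ hx, key _ hy]
  have hfac : (0:ℝ) < π * (σD2 + σs2) + (1 - π) * σs2 := by nlinarith
  have hdx : (0:ℝ) < (σD2 + σs2) * σs2 + c2 * σθ2sq * (π * (σD2 + σs2) + (1 - π) * σs2) :=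
    add_pos (mul_pos hS hσs2) (mul_pos (mul_pos hc2 hx) hfac)
  have hdy : (0:ℝ) < (σD2 + σs2) * σs2 + c2 * σθ1sq * (π * (σD2 + σs2) + (1 - π) * σs2) :=
    add_pos (mul_pos hS hσs2) (mul_pos (mul_pos hc2 hy) hfac)
  rw [div_lt_div_iff₀ hdy hdx]
  nlinarith [mul_pos (mul_pos hσD2 (mul_pos hc2 (mul_pos hσs2 hσs2)))
    (mul_pos (by linarith : (0:ℝ) < 1 - π) (by linarith : (0:ℝ) < σθ1sq - σθ2sq))]
end
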